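/- Consider two finite binary trees 𝓡 and 𝓡' with identical shape. In 𝓡, every internal node with value x and parameters t ∈ (1/Δ, 1], t' ∈ (0,1] has left child value (1-t')x and right child value t'(1-t)x. In 𝓡', the corresponding node with value x' has left child (1-t')x' and right child t'·x' (same t'). If the roots have equal value S > 0, then for every node reached from the root by a path containing k right-child-moves, the value in 𝓡' is at least (1-1/Δ)^(-k) times the value of the corresponding node in 𝓡. -/

import Mathlib

/-- A node of the recursion tree is described by the path from the root leading to it:
a list of steps, each step recording the direction (`true` = right child) together with the
parameters `t` and `t'` of the parent node. In `𝓡` a node of value `x` has left child of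
value `(1-t')x` and right child of value `t'(1-t)x`; in `𝓡'` the left child has value
`(1-t')x` and the right child has value `t'·x`. -/
theorem tree_comparison (Δ S : ℝ) (hΔ : 1 < Δ) (hS : 0 < S)
    (path : List (Bool × ℝ × ℝ))
    (hparams : ∀ p ∈ path, 1/Δ < p.2.1 ∧ p.2.1 ≤ 1 ∧ 0 < p.2.2 ∧ p.2.2 ≤ 1) :
    ((1 - 1/Δ) ^ (path.countP (fun p => p.1)))⁻¹ *
        (S * (path.map (fun p => if p.1 then p.2.2 * (1 - p.2.1) else 1 - p.2.2)).prod)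
      ≤ S * (path.map (fun p => if p.1 then p.2.2 else 1 - p.2.2)).prod := by
  have hd : 0 < 1 - 1/Δ := by
    have : 1/Δ < 1 := by
      rw [div_lt_one (by linarith)]; linarith
    linarith
  induction path with
  | nil => simp
  | cons p rest ih =>
    obtain ⟨b, t, t'⟩ := p
    have hp := hparams ⟨b, t, t'⟩ List.mem_cons_self
    simp only at hp
    obtain ⟨h1, h2, h3, h4⟩ := hp
    have ih' := ih (fun q hq => hparams q (List.mem_cons_of_mem _ hq))
    have hprodR : 0 ≤ (rest.map (fun p => if p.1 then p.2.2 * (1 - p.2.1) else 1 - p.2.2)).prod := by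
      apply List.prod_nonneg
      intro x hx
      simp only [List.mem_map] at hx
      obtain ⟨q, hq, rfl⟩ := hx
      obtain ⟨a1, a2, a3, a4⟩ := hparams q (List.mem_cons_of_mem _ hq)
      split
      · exact mul_nonneg a3.le (by linarith)
      · exact sub_nonneg.mpr a4
    have hinv : 0 ≤ ((1 - 1/Δ) ^ (rest.countP (fun p => p.1)))⁻¹ := by positivity
    set K := ((1 - 1/Δ) ^ (rest.countP (fun p => p.1)))⁻¹ with hK
    set PR := (rest.map (fun p => if p.1 then p.2.2 * (1 - p.2.1) else 1 - p.2.2)).prod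
    set PR' := (rest.map (fun p => if p.1 then p.2.2 else 1 - p.2.2)).prod
    cases b with
    | false =>
      simp only [List.countP_cons, List.map_cons, List.prod_cons, if_false,
        decide_false, Bool.false_eq_true, ite_false]
      calc K * (S * ((1 - t') * PR)) = (1 - t') * (K * (S * PR)) := by ring
        _ ≤ (1 - t') * (S * PR') := by
            apply mul_le_mul_of_nonneg_left ih' (by linarith)
        _ = S * ((1 - t') * PR') := by ring
    | true =>
      simp only [List.countP_cons, List.map_cons, List.prod_cons, decide_true, ite_true]
      rw [pow_succ, mul_inv]
      have h1t : 1 - t < 1 - 1/Δ := by linarith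
      have key : (1 - 1/Δ)⁻¹ * (t' * (1 - t)) ≤ t' := by
        rw [inv_mul_le_iff₀ hd]
        nlinarith
      have h0 : 0 ≤ K * (S * PR) := by positivity
      calc K * (1 - 1/Δ)⁻¹ * (S * (t' * (1 - t) * PR))
          = ((1 - 1/Δ)⁻¹ * (t' * (1 - t))) * (K * (S * PR)) := by ring
        _ ≤ t' * (S * PR') := by
            apply mul_le_mul key ih' h0 (le_of_lt h3)
        _ = S * (t' * PR') := by ring
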